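/- Assume L ⊆ Σ^ω is recognized by some deterministic co-Büchi automaton. For every pair (u,v) of finite words: θ(u,v) is empty if and only if (u,v) ≈_L ⊥. -/

import Mathlib

open Classical

/-- Rank of a transition in a co-Büchi automaton: `one` or `two`. -/
inductive Rk | one | two
deriving DecidableEq

/-- A co-Büchi automaton over alphabet `A` with state type `Q`:
initial states and a transition relation where each transition carries a rank. -/
structure CoBuchi (A : Type) (Q : Type) where
  init : Set Q
  delta : Set (Q × A × Rk × Q)

namespace CoBuchi

variable {A Q : Type}

/-- Every state has an outgoing transition on every letter. -/
def Total (M : CoBuchi A Q) : Prop :=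
  ∀ q a, ∃ r q', (q, a, r, q') ∈ M.delta

/-- The prefix `α[0..n-1]` of an infinite word. -/
def prefW (α : ℕ → A) (n : ℕ) : List A := (List.range n).map α

/-- The infinite word `a·w`. -/
def consW (a : A) (w : ℕ → A) : ℕ → A := fun n => match n with
  | 0 => a
  | Nat.succ k => w k

/-- `L(M,q)`: infinite words having a run from `q` with only finitely many rank-1
transitions. -/
def LangFrom (M : CoBuchi A Q) (q : Q) : Set (ℕ → A) :=
  { w | ∃ (ρ : ℕ → Q) (r : ℕ → Rk), ρ 0 = q ∧
        (∀ n, (ρ n, w n, r n, ρ (n + 1)) ∈ M.delta) ∧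
        ∃ N, ∀ n, N ≤ n → r n = Rk.two }

/-- `L(M)`: the language of the automaton. -/
def Lang (M : CoBuchi A Q) : Set (ℕ → A) :=
  { w | ∃ q ∈ M.init, w ∈ M.LangFrom q }

/-- `q →₂^w q'`: a finite run from `q` to `q'` on `w` using only rank-2 transitions. -/
def SafeReach (M : CoBuchi A Q) : Q → List A → Q → Prop
  | q, [], q' => q = q'
  | q, a :: w, q' => ∃ p, (q, a, Rk.two, p) ∈ M.delta ∧ SafeReach M p w q'

/-- A finite run from `q` to `q'` on `w` using transitions of any rank. -/
def Reach (M : CoBuchi A Q) : Q → List A → Q → Prop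
  | q, [], q' => q = q'
  | q, a :: w, q' => ∃ r p, (q, a, r, p) ∈ M.delta ∧ Reach M p w q'

/-- Safe language of a state. -/
def Lsf (M : CoBuchi A Q) (q : Q) : Set (List A) := { w | ∃ q', M.SafeReach q w q' }

/-- Semantically-deterministic: every transition respects residuals. -/
def SemDet (M : CoBuchi A Q) : Prop :=
  ∀ p a rk q, (p, a, rk, q) ∈ M.delta →
    M.LangFrom q = { w | consW a w ∈ M.LangFrom p }

/-- Unsafe-saturated: all residual-respecting rank-1 transitions are present. -/
def UnsafeSat (M : CoBuchi A Q) : Prop :=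
  ∀ p a q, M.LangFrom q = { w | consW a w ∈ M.LangFrom p } →
    (p, a, Rk.one, q) ∈ M.delta

/-- Safe-deterministic: at most one rank-2 transition per state and letter. -/
def SafeDet (M : CoBuchi A Q) : Prop :=
  ∀ p a q q', (p, a, Rk.two, q) ∈ M.delta → (p, a, Rk.two, q') ∈ M.delta → q = q'

/-- Normalized: every rank-2 transition can be completed to a rank-2 loop. -/
def Normalized (M : CoBuchi A Q) : Prop :=
  ∀ q a q', (q, a, Rk.two, q') ∈ M.delta → ∃ x, M.SafeReach q' x q

/-- Deterministic: one initial state, exactly one transition per state and letter. -/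
def Deterministic (M : CoBuchi A Q) : Prop :=
  (∃! q, q ∈ M.init) ∧ ∀ p a, ∃! t : Rk × Q, (p, a, t.1, t.2) ∈ M.delta

/-- History-deterministic: a strategy `σ : Σ* → Q` resolving the nondeterminism,
whose run on every `α ∈ L(M)` can be ranked with finitely many rank-1 transitions. -/
def HistoryDet (M : CoBuchi A Q) : Prop :=
  ∃ σ : List A → Q, σ [] ∈ M.init ∧
    (∀ w a, ∃ rk, (σ w, a, rk, σ (w ++ [a])) ∈ M.delta) ∧
    ∀ α ∈ M.Lang, ∃ r : ℕ → Rk,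
      (∀ n, (σ (prefW α n), α n, r n, σ (prefW α (n + 1))) ∈ M.delta) ∧
      ∃ N, ∀ n, N ≤ n → r n = Rk.two

/-- `q` and `q'` are in the same safe SCC (mutually reachable via rank-2 runs). -/
def SameSafeSCC (M : CoBuchi A Q) (q q' : Q) : Prop :=
  (∃ x, M.SafeReach q x q') ∧ (∃ y, M.SafeReach q' y q)

end CoBuchi

section LangDefs

variable {A : Type} [Nonempty A]

/-- The infinite word `u·w`. -/
def appW (u : List A) (w : ℕ → A) : ℕ → A :=
  fun n => if h : n < u.length then u.get ⟨n, h⟩ else w (n - u.length)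

/-- The infinite word `v^ω` (arbitrary if `v = ε`). -/
noncomputable def iterW (v : List A) : ℕ → A :=
  fun n =>
    if h : v = [] then Classical.arbitrary A
    else v.get ⟨n % v.length, Nat.mod_lt _ (List.length_pos_iff.mpr h)⟩

/-- The ultimately periodic word `u v^ω`. -/
noncomputable def upW (u v : List A) : ℕ → A := appW u (iterW v)

/-- The right congruence `u ∼_L v`. -/
def SimL (L : Set (ℕ → A)) (u v : List A) : Prop :=
  ∀ w : ℕ → A, appW u w ∈ L ↔ appW v w ∈ L

/-- `(u,v) ≈_L ⊥`: `v ≠ ε` and `u(vx)^ω ∉ L` for all `x` with `uvx ∼_L u`. -/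
def ApproxBot (L : Set (ℕ → A)) (u v : List A) : Prop :=
  v ≠ [] ∧ ∀ x : List A, SimL L (u ++ v ++ x) u → upW u (v ++ x) ∉ L

/-- The safe language of a pair: `sfl(u,v) = {x | (u,vx) not ≈_L ⊥}`. -/
def Sfl (L : Set (ℕ → A)) (u v : List A) : Set (List A) :=
  { x | ¬ ApproxBot L u (v ++ x) }

/-- `(u,v) ≡_L (u',v')`. -/
def EquivL (L : Set (ℕ → A)) (u v u' v' : List A) : Prop :=
  SimL L (u ++ v) (u' ++ v') ∧ Sfl L u v = Sfl L u' v'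

/-- `(u,v)` is pointed. -/
def IsPointed (L : Set (ℕ → A)) (u v : List A) : Prop :=
  ¬ ApproxBot L u v ∧
    ∀ u₁ u₂ : List A, SimL L (u₁ ++ u₂) u → ¬ ApproxBot L u₁ (u₂ ++ v) →
      Sfl L u v = Sfl L u₁ (u₂ ++ v)

/-- `(u,v) ≈_L (u',v')` (for pairs with nonempty second components). -/
def ApproxL (L : Set (ℕ → A)) (u v u' v' : List A) : Prop :=
  SimL L u u' ∧ SimL L (u ++ v) (u' ++ v') ∧
    ∀ x : List A, SimL L (u ++ v ++ x) u →
      (upW u (v ++ x) ∈ L ↔ upW u' (v' ++ x) ∈ L)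

/-- `L` is recognized by some (total) deterministic co-Büchi automaton. -/
def DCWRecognizable (L : Set (ℕ → A)) : Prop :=
  ∃ (Q : Type) (_ : Fintype Q) (M : CoBuchi A Q), M.Deterministic ∧ M.Lang = L

/-- IsPointed pairs. -/
def PointedPair (L : Set (ℕ → A)) : Type :=
  { p : List A × List A // IsPointed L p.1 p.2 }

/-- `≡_L` as a setoid on all pairs. -/
def equivLSetoid (L : Set (ℕ → A)) : Setoid (List A × List A) where
  r p q := EquivL L p.1 p.2 q.1 q.2
  iseqv := {
    refl := fun p => ⟨fun w => Iff.rfl, rfl⟩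
    symm := fun h => ⟨fun w => (h.1 w).symm, h.2.symm⟩
    trans := fun h g => ⟨fun w => (h.1 w).trans (g.1 w), h.2.trans g.2⟩ }

/-- `≡_L` as a setoid on pointed pairs. -/
def canonSetoid (L : Set (ℕ → A)) : Setoid (PointedPair L) where
  r p q := EquivL L p.1.1 p.1.2 q.1.1 q.1.2
  iseqv := {
    refl := fun p => ⟨fun w => Iff.rfl, rfl⟩
    symm := fun h => ⟨fun w => (h.1 w).symm, h.2.symm⟩
    trans := fun h g => ⟨fun w => (h.1 w).trans (g.1 w), h.2.trans g.2⟩ }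

/-- States of the canonical automaton: `≡_L`-classes of pointed pairs. -/
def CanonState (L : Set (ℕ → A)) : Type := Quotient (canonSetoid L)

/-- The class `⟦u,v⟧` of a pointed pair. -/
def cls (L : Set (ℕ → A)) (u v : List A) (h : IsPointed L u v) : CanonState L :=
  Quotient.mk (canonSetoid L) ⟨(u, v), h⟩

/-- The canonical automaton `A_{≡_L}`. -/
def canonAut (L : Set (ℕ → A)) : CoBuchi A (CanonState L) where
  init := { s | ∃ (u v : List A) (h : IsPointed L u v),
              s = cls L u v h ∧ SimL L (u ++ v) [] }
  delta := { t |
    (∃ (u v : List A) (h : IsPointed L u v) (h' : IsPointed L u (v ++ [t.2.1])),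
        ¬ ApproxBot L u (v ++ [t.2.1]) ∧
        t.1 = cls L u v h ∧ t.2.2.1 = Rk.two ∧
        t.2.2.2 = cls L u (v ++ [t.2.1]) h') ∨
    (∃ (u v u' v' : List A) (h : IsPointed L u v) (h' : IsPointed L u' v'),
        SimL L (u ++ v ++ [t.2.1]) (u' ++ v') ∧
        t.1 = cls L u v h ∧ t.2.2.1 = Rk.one ∧ t.2.2.2 = cls L u' v' h') }

/-- `θ(u,v)`: states of `A_{≡_L}` reachable by reading `u` from an initial state
(any ranks) and then `v` via rank-2 transitions only. -/
def theta (L : Set (ℕ → A)) (u v : List A) : Set (CanonState L) :=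
  { q | ∃ p₀ ∈ (canonAut L).init, ∃ p,
          (canonAut L).Reach p₀ u p ∧ (canonAut L).SafeReach p v q }

/-- `(u,v)` is supported: `θ(u,v) ≠ ∅`. -/
def Supported (L : Set (ℕ → A)) (u v : List A) : Prop := (theta L u v).Nonempty

/-- `(u,v)` is double-supported: two distinct states of `θ(u,v)` in the same safe SCC. -/
def DoubleSupported (L : Set (ℕ → A)) (u v : List A) : Prop :=
  ∃ q ∈ theta L u v, ∃ q' ∈ theta L u v, q ≠ q' ∧ (canonAut L).SameSafeSCC q q'

/-- `(u,v)` is single-supported. -/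
def SingleSupported (L : Set (ℕ → A)) (u v : List A) : Prop :=
  Supported L u v ∧ ¬ DoubleSupported L u v

/-- `w` concatenated with itself `m` times. -/
def repCat (w : List A) : ℕ → List A
  | 0 => []
  | Nat.succ m => w ++ repCat w m


end LangDefs

section Aux
variable {A : Type} [Nonempty A]
set_option linter.unusedSectionVars false

lemma appW_lt (u : List A) (w : ℕ → A) {n : ℕ} (h : n < u.length) :
    appW u w n = u.get ⟨n, h⟩ := dif_pos h

lemma appW_ge (u : List A) (w : ℕ → A) {n : ℕ} (h : u.length ≤ n) :
    appW u w n = w (n - u.length) := dif_neg (by omega)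

lemma appW_nil (w : ℕ → A) : appW ([] : List A) w = w := by
  funext n; simp [appW]

lemma appW_append (u v : List A) (w : ℕ → A) :
    appW (u ++ v) w = appW u (appW v w) := by
  funext n
  by_cases h : n < u.length
  · rw [appW_lt u _ h, appW_lt (u ++ v) w (by simp; omega)]
    simp only [List.get_eq_getElem]
    exact List.getElem_append_left h
  · push_neg at h
    rw [appW_ge u _ h]
    by_cases h2 : n < u.length + v.length
    · rw [appW_lt (u ++ v) w (by simpa using h2), appW_lt v _ (by omega)]
      simp only [List.get_eq_getElem]
      rw [List.getElem_append_right (by omega)]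
    · push_neg at h2
      rw [appW_ge (u ++ v) w (by simpa using h2), appW_ge v _ (by omega)]
      congr 1
      simp; omega

lemma iterW_apply {w : List A} (hw : w ≠ []) (n : ℕ) :
    iterW w n = w.get ⟨n % w.length, Nat.mod_lt _ (List.length_pos_iff.mpr hw)⟩ :=
  dif_neg hw

lemma repCat_add (w : List A) (a b : ℕ) :
    repCat w (a + b) = repCat w a ++ repCat w b := by
  induction a with
  | zero => simp [repCat]
  | succ m ih => rw [Nat.succ_add, repCat, repCat, ih, List.append_assoc]

lemma repCat_one (w : List A) : repCat w 1 = w := by simp [repCat]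

lemma length_repCat (w : List A) (m : ℕ) : (repCat w m).length = m * w.length := by
  induction m with
  | zero => simp [repCat]
  | succ k ih => simp [repCat, ih]; ring

lemma repCat_ne_nil {w : List A} (hw : w ≠ []) {m : ℕ} (hm : 1 ≤ m) :
    repCat w m ≠ [] := by
  cases m with
  | zero => omega
  | succ k => simp [repCat, hw]

lemma getElem_repCat {w : List A} (hw : w ≠ []) {m i : ℕ} (hi : i < (repCat w m).length) :
    (repCat w m)[i] = w[i % w.length]'(Nat.mod_lt _ (List.length_pos_iff.mpr hw)) := by
  induction m generalizing i with
  | zero => simp [repCat] at hi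
  | succ k ih =>
    rw [length_repCat] at hi
    by_cases h : i < w.length
    · simp only [Nat.mod_eq_of_lt h]
      exact List.getElem_append_left h
    · push_neg at h
      have hi' : i - w.length < (repCat w k).length := by
        rw [length_repCat]; rw [Nat.succ_mul] at hi; omega
      have e1 : (repCat w (k+1))[i] = (repCat w k)[i - w.length]'hi' :=
        List.getElem_append_right h
      rw [e1, ih hi']
      congr 1
      conv_rhs => rw [show i = (i - w.length) + w.length by omega]
      rw [Nat.add_mod_right]

lemma iterW_repCat {w : List A} (hw : w ≠ []) {m : ℕ} (hm : 1 ≤ m) :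
    iterW (repCat w m) = iterW w := by
  have hn := repCat_ne_nil hw hm
  have hposw := List.length_pos_iff.mpr hw
  funext n
  rw [iterW_apply hn, iterW_apply hw]
  simp only [List.get_eq_getElem]
  rw [getElem_repCat hw]
  congr 1
  rw [length_repCat]
  exact Nat.mod_mod_of_dvd n (dvd_mul_left _ _)

/-- rotation: reading `p` then `(q++p)^ω` is the same as `(p++q)^ω`. -/
lemma appW_iterW_rot (p q : List A) (h : p ++ q ≠ []) :
    appW p (iterW (q ++ p)) = iterW (p ++ q) := by
  have hqp : q ++ p ≠ [] := by simp at h ⊢; tauto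
  have hT : 0 < p.length + q.length := by
    have := List.length_pos_iff.mpr h; simp at this; omega
  funext n
  by_cases hn : n < p.length
  · rw [appW_lt p _ hn, iterW_apply h]
    simp only [List.get_eq_getElem]
    have hidx : n % (p ++ q).length = n := Nat.mod_eq_of_lt (by simp; omega)
    simp only [hidx]
    exact (List.getElem_append_left hn).symm
  · push_neg at hn
    rw [appW_ge p _ hn, iterW_apply hqp, iterW_apply h]
    simp only [List.get_eq_getElem, List.length_append]
    set T := q.length + p.length with hTdef
    have hTT : p.length + q.length = T := by omega
    simp only [hTT]
    set r := (n - p.length) % T with hr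
    have hrT : r < T := Nat.mod_lt _ (by omega)
    have hnm : n % T = (r + p.length) % T := by
      rw [hr, Nat.mod_add_mod, Nat.sub_add_cancel hn]
    simp only [hnm]
    by_cases hrq : r < q.length
    · have h2 : (r + p.length) % T = r + p.length := Nat.mod_eq_of_lt (by omega)
      simp only [h2]
      have e1 : (q ++ p)[r]'(by simp; omega) = q[r] := List.getElem_append_left hrq
      have e2 : (p ++ q)[r + p.length]'(by simp; omega)
          = q[r + p.length - p.length]'(by simp; omega) :=
        List.getElem_append_right (by omega)
      rw [e1, e2]
      have h3 : r + p.length - p.length = r := by omega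
      simp only [h3]
    · push_neg at hrq
      have h3 : (r + p.length) % T = r - q.length := by
        rw [Nat.mod_eq_sub_mod (by omega), Nat.mod_eq_of_lt (by omega)]
        omega
      simp only [h3]
      have e1 : (q ++ p)[r]'(by simp; omega) = p[r - q.length]'(by omega) :=
        List.getElem_append_right hrq
      have e2 : (p ++ q)[r - q.length]'(by simp; omega) = p[r - q.length]'(by omega) :=
        List.getElem_append_left (by omega)
      rw [e1, e2]

end Aux
section Aux2
open CoBuchi
variable {A : Type} [Nonempty A]
set_option linter.unusedSectionVars false

lemma prefW_zero (α : ℕ → A) : prefW α 0 = [] := by simp [prefW]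

lemma prefW_succ (α : ℕ → A) (n : ℕ) : prefW α (n + 1) = prefW α n ++ [α n] := by
  simp [prefW, List.range_succ]

lemma length_prefW (α : ℕ → A) (n : ℕ) : (prefW α n).length = n := by simp [prefW]

lemma getElem_prefW (α : ℕ → A) {n i : ℕ} (h : i < (prefW α n).length) :
    (prefW α n)[i] = α i := by
  simp [prefW] at h ⊢

lemma prefW_add (α : ℕ → A) (a b : ℕ) :
    prefW α (a + b) = prefW α a ++ (List.range b).map (fun j => α (a + j)) := by
  induction b with
  | zero => simp
  | succ k ih =>
    rw [show a + (k+1) = (a+k)+1 by omega, prefW_succ, ih, List.range_succ]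
    simp

lemma prefW_appW (u : List A) (β : ℕ → A) (k : ℕ) :
    prefW (appW u β) (u.length + k) = u ++ prefW β k := by
  have base : prefW (appW u β) u.length = u := by
    apply List.ext_getElem (by simp [length_prefW])
    intro i h1 h2
    rw [getElem_prefW _ h1, appW_lt u β h2]
    simp
  rw [prefW_add, base]
  congr 1
  unfold prefW
  apply List.map_congr_left
  intro j hj
  simp at hj
  rw [appW_ge u β (by omega)]
  congr 1; omega

/-- `SimL` basic properties -/
lemma simL_refl (L : Set (ℕ → A)) (a : List A) : SimL L a a := fun _ => Iff.rfl

lemma simL_symm {L : Set (ℕ → A)} {a b : List A} (h : SimL L a b) : SimL L b a :=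
  fun w => (h w).symm

lemma simL_trans {L : Set (ℕ → A)} {a b c : List A} (h : SimL L a b) (h' : SimL L b c) :
    SimL L a c := fun w => (h w).trans (h' w)

lemma simL_append {L : Set (ℕ → A)} {a b : List A} (h : SimL L a b) (z : List A) :
    SimL L (a ++ z) (b ++ z) := by
  intro w
  rw [appW_append, appW_append]
  exact h _

lemma simL_repCat {L : Set (ℕ → A)} {a P : List A} (h : SimL L (a ++ P) a) (k : ℕ) :
    SimL L (a ++ repCat P k) a := by
  induction k with
  | zero => simpa [repCat] using simL_refl L a
  | succ m ih =>
    have h1 : SimL L ((a ++ P) ++ repCat P m) (a ++ repCat P m) := simL_append h _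
    have h2 : SimL L (a ++ repCat P (m+1)) ((a ++ P) ++ repCat P m) := by
      rw [show repCat P (m+1) = P ++ repCat P m from rfl, ← List.append_assoc]
      exact simL_refl L _
    exact simL_trans h2 (simL_trans h1 ih)

lemma upW_def (u v : List A) : upW u v = appW u (iterW v) := rfl

/-- `ApproxBot` depends on first component only through `∼`. -/
lemma approxBot_congr {L : Set (ℕ → A)} {a a' : List A} (h : SimL L a a') (w : List A) :
    ApproxBot L a w ↔ ApproxBot L a' w := by
  have key : ∀ {b b' : List A}, SimL L b b' → ApproxBot L b w → ApproxBot L b' w := by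
    intro b b' hb ⟨hne, H⟩
    refine ⟨hne, fun x hx => ?_⟩
    have hx' : SimL L (b ++ w ++ x) b := by
      have h1 : SimL L (b ++ (w ++ x)) (b' ++ (w ++ x)) := simL_append hb _
      simp only [← List.append_assoc] at h1
      exact simL_trans h1 (simL_trans hx (simL_symm hb))
    have hm := H x hx'
    rw [upW_def] at hm ⊢
    intro hmem
    exact hm ((hb (iterW (w ++ x))).mpr hmem)
  exact ⟨key h, key (simL_symm h)⟩

lemma approxBot_mono {L : Set (ℕ → A)} {a w : List A} (h : ApproxBot L a w) (z : List A) :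
    ApproxBot L a (w ++ z) := by
  obtain ⟨hne, H⟩ := h
  refine ⟨by simp [hne], fun x hx => ?_⟩
  have := H (z ++ x) (by simpa [List.append_assoc] using hx)
  simpa [List.append_assoc] using this

lemma sfl_shift (L : Set (ℕ → A)) (a w z : List A) :
    Sfl L a (w ++ z) = {y | z ++ y ∈ Sfl L a w} := by
  ext y
  simp only [Sfl, Set.mem_setOf_eq, List.append_assoc]

/-- the fundamental inclusion: splitting earlier gives a smaller safe language. -/
lemma sfl_incl {L : Set (ℕ → A)} {w₁ w₂ u₁ : List A} (h : SimL L (w₁ ++ w₂) u₁)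
    (u₂ : List A) : Sfl L w₁ (w₂ ++ u₂) ⊆ Sfl L u₁ u₂ := by
  intro x hx
  simp only [Sfl, Set.mem_setOf_eq] at hx ⊢
  intro hAB
  obtain ⟨hne, HAB⟩ := hAB
  -- extract witness from ¬ ApproxBot w₁ (w₂ ++ u₂ ++ x)
  rw [ApproxBot, not_and, not_forall] at hx
  obtain ⟨y, hy⟩ := hx (by simp [hne])
  rw [Classical.not_imp, not_not] at hy
  obtain ⟨hsim, hmem⟩ := hy
  -- hsim : SimL L (w₁ ++ (w₂ ++ u₂ ++ x) ++ y) w₁, hmem : upW w₁ (w₂ ++ u₂ ++ x ++ y) ∈ L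
  -- witness for (u₁, u₂ ++ x): z := y ++ w₂
  apply HAB (y ++ w₂)
  · -- SimL L (u₁ ++ (u₂ ++ x) ++ (y ++ w₂)) u₁
    have e1 : SimL L (u₁ ++ ((u₂ ++ x) ++ (y ++ w₂))) ((w₁ ++ w₂) ++ ((u₂ ++ x) ++ (y ++ w₂))) :=
      simL_append (simL_symm h) _
    have e2 : SimL L ((w₁ ++ (w₂ ++ u₂ ++ x) ++ y) ++ w₂) (w₁ ++ w₂) := simL_append hsim w₂
    have e3 : (w₁ ++ w₂) ++ ((u₂ ++ x) ++ (y ++ w₂)) = (w₁ ++ (w₂ ++ u₂ ++ x) ++ y) ++ w₂ := by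
      simp [List.append_assoc]
    have e4 : u₁ ++ (u₂ ++ x) ++ (y ++ w₂) = u₁ ++ ((u₂ ++ x) ++ (y ++ w₂)) := by
      simp [List.append_assoc]
    rw [e4]
    rw [e3] at e1
    exact simL_trans e1 (simL_trans e2 h)
  · -- upW u₁ (u₂ ++ x ++ (y ++ w₂)) ∈ L
    rw [upW_def]
    have hrot : appW w₂ (iterW ((u₂ ++ x ++ y) ++ w₂)) = iterW (w₂ ++ (u₂ ++ x ++ y)) := by
      apply appW_iterW_rot
      intro hc
      rcases List.append_eq_nil_iff.mp hc with ⟨-, h2⟩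
      rcases List.append_eq_nil_iff.mp h2 with ⟨h3, -⟩
      exact hne h3
    have trans1 := simL_symm h (iterW (u₂ ++ x ++ (y ++ w₂)))
    rw [trans1]
    rw [appW_append]
    have e5 : u₂ ++ x ++ (y ++ w₂) = (u₂ ++ x ++ y) ++ w₂ := by simp [List.append_assoc]
    rw [e5, hrot]
    have e6 : w₂ ++ (u₂ ++ x ++ y) = w₂ ++ u₂ ++ x ++ y := by simp [List.append_assoc]
    rw [e6]
    exact hmem

/-- pointedness propagates along non-bottom extensions. -/
lemma isPointed_ext {L : Set (ℕ → A)} {u v : List A} (h : IsPointed L u v) (a : A)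
    (hna : ¬ ApproxBot L u (v ++ [a])) : IsPointed L u (v ++ [a]) := by
  refine ⟨hna, fun u₁ u₂ hsim hnab => ?_⟩
  have hnab' : ¬ ApproxBot L u₁ (u₂ ++ v) := by
    intro hab
    exact hnab (by simpa [List.append_assoc] using approxBot_mono hab [a])
  have heq := h.2 u₁ u₂ hsim hnab'
  have e1 : u₂ ++ (v ++ [a]) = (u₂ ++ v) ++ [a] := by simp
  rw [e1, sfl_shift, sfl_shift, heq]

end Aux2
section Det
open CoBuchi
variable {A : Type} [Nonempty A] {Q : Type}
set_option linter.unusedSectionVars false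

/-- the unique transition out of `q` on `a`. -/
noncomputable def stp (M : CoBuchi A Q) (hdet : M.Deterministic) (q : Q) (a : A) : Rk × Q :=
  (hdet.2 q a).exists.choose

lemma stp_mem (M : CoBuchi A Q) (hdet : M.Deterministic) (q : Q) (a : A) :
    (q, a, (stp M hdet q a).1, (stp M hdet q a).2) ∈ M.delta :=
  (hdet.2 q a).exists.choose_spec

lemma stp_uniq (M : CoBuchi A Q) (hdet : M.Deterministic) {q : Q} {a : A} {rk : Rk} {q' : Q}
    (h : (q, a, rk, q') ∈ M.delta) : (rk, q') = stp M hdet q a :=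
  (hdet.2 q a).unique h (stp_mem M hdet q a)

noncomputable def runSt (M : CoBuchi A Q) (hdet : M.Deterministic) (q : Q) (w : List A) : Q :=
  w.foldl (fun p a => (stp M hdet p a).2) q

lemma runSt_nil (M : CoBuchi A Q) (hdet : M.Deterministic) (q : Q) :
    runSt M hdet q [] = q := rfl

lemma runSt_append (M : CoBuchi A Q) (hdet : M.Deterministic) (q : Q) (x y : List A) :
    runSt M hdet q (x ++ y) = runSt M hdet (runSt M hdet q x) y := by
  simp only [runSt, List.foldl_append]

lemma runSt_snoc (M : CoBuchi A Q) (hdet : M.Deterministic) (q : Q) (w : List A) (a : A) :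
    runSt M hdet q (w ++ [a]) = (stp M hdet (runSt M hdet q w) a).2 := by
  rw [runSt_append]; rfl

lemma safeReach_append (M : CoBuchi A Q) {p r : Q} {x y : List A} :
    M.SafeReach p (x ++ y) r ↔ ∃ q, M.SafeReach p x q ∧ M.SafeReach q y r := by
  induction x generalizing p with
  | nil =>
    constructor
    · intro h; exact ⟨p, rfl, h⟩
    · rintro ⟨q, hq, h⟩
      have : p = q := hq
      rw [this]; exact h
  | cons a x ih =>
    simp only [List.cons_append, CoBuchi.SafeReach]
    constructor
    · rintro ⟨m, hm, hrest⟩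
      obtain ⟨q, h1, h2⟩ := ih.mp hrest
      exact ⟨q, ⟨m, hm, h1⟩, h2⟩
    · rintro ⟨q, ⟨m, hm, h1⟩, h2⟩
      exact ⟨m, hm, ih.mpr ⟨q, h1, h2⟩⟩

lemma reach_snoc (M : CoBuchi A Q) {p q q' : Q} {w : List A} {c : A} {rk : Rk}
    (h : M.Reach p w q) (h2 : (q, c, rk, q') ∈ M.delta) : M.Reach p (w ++ [c]) q' := by
  induction w generalizing p with
  | nil =>
    have : p = q := h
    rw [this]
    exact ⟨rk, q', h2, rfl⟩
  | cons a w ih =>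
    obtain ⟨r0, m, hm, hrest⟩ := h
    exact ⟨r0, m, hm, ih hrest⟩

lemma safeReach_runSt (M : CoBuchi A Q) (hdet : M.Deterministic) {p q : Q} {w : List A}
    (h : M.SafeReach p w q) : runSt M hdet p w = q := by
  induction w generalizing p with
  | nil => exact h
  | cons a w ih =>
    obtain ⟨m, hm, hrest⟩ := h
    have := stp_uniq M hdet hm
    show runSt M hdet (stp M hdet p a).2 w = q
    rw [← this]
    exact ih hrest

noncomputable def rkAt (M : CoBuchi A Q) (hdet : M.Deterministic) (q : Q) (α : ℕ → A)
    (n : ℕ) : Rk :=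
  (stp M hdet (runSt M hdet q (prefW α n)) (α n)).1

lemma rkAt_def (M : CoBuchi A Q) (hdet : M.Deterministic) (q : Q) (α : ℕ → A) (n : ℕ) :
    rkAt M hdet q α n = (stp M hdet (runSt M hdet q (prefW α n)) (α n)).1 := rfl

lemma langFrom_iff (M : CoBuchi A Q) (hdet : M.Deterministic) (q : Q) (α : ℕ → A) :
    α ∈ M.LangFrom q ↔ ∃ N, ∀ n, N ≤ n → rkAt M hdet q α n = Rk.two := by
  constructor
  · rintro ⟨ρ, r, h0, hstep, N, hN⟩
    have hρ : ∀ n, ρ n = runSt M hdet q (prefW α n) := by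
      intro n
      induction n with
      | zero => rw [h0, prefW_zero, runSt_nil]
      | succ k ih =>
        have hu := stp_uniq M hdet (hstep k)
        rw [prefW_succ, runSt_snoc, ← ih, ← hu]
    refine ⟨N, fun n hn => ?_⟩
    have hu := stp_uniq M hdet (hstep n)
    rw [rkAt_def, ← hρ n, ← hu]
    exact hN n hn
  · rintro ⟨N, hN⟩
    refine ⟨fun n => runSt M hdet q (prefW α n), fun n => rkAt M hdet q α n, ?_, ?_, N, hN⟩
    · show runSt M hdet q (prefW α 0) = q
      rw [prefW_zero, runSt_nil]
    · intro n
      show (runSt M hdet q (prefW α n), α n, rkAt M hdet q α n,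
        runSt M hdet q (prefW α (n+1))) ∈ M.delta
      rw [prefW_succ, runSt_snoc]
      exact stp_mem M hdet _ _

lemma langFrom_shift (M : CoBuchi A Q) (hdet : M.Deterministic) (q : Q) (g : List A)
    (β : ℕ → A) : appW g β ∈ M.LangFrom q ↔ β ∈ M.LangFrom (runSt M hdet q g) := by
  have key : ∀ k, rkAt M hdet q (appW g β) (g.length + k)
      = rkAt M hdet (runSt M hdet q g) β k := by
    intro k
    rw [rkAt_def, rkAt_def, prefW_appW, runSt_append]
    have e : appW g β (g.length + k) = β k := by
      rw [appW_ge g β (Nat.le_add_right _ _)]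
      congr 1
      omega
    rw [e]
  rw [langFrom_iff M hdet, langFrom_iff M hdet]
  constructor
  · rintro ⟨N, hN⟩
    exact ⟨N, fun k hk => by rw [← key k]; exact hN _ (by omega)⟩
  · rintro ⟨N, hN⟩
    refine ⟨g.length + N, fun n hn => ?_⟩
    have e : n = g.length + (n - g.length) := by omega
    rw [e, key]
    exact hN _ (by omega)

noncomputable def initSt (M : CoBuchi A Q) (hdet : M.Deterministic) : Q :=
  hdet.1.exists.choose

lemma initSt_mem (M : CoBuchi A Q) (hdet : M.Deterministic) : initSt M hdet ∈ M.init :=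
  hdet.1.exists.choose_spec

lemma mem_lang_iff (M : CoBuchi A Q) (hdet : M.Deterministic) (α : ℕ → A) :
    α ∈ M.Lang ↔ α ∈ M.LangFrom (initSt M hdet) := by
  constructor
  · rintro ⟨p, hp, hmem⟩
    have : p = initSt M hdet := hdet.1.unique hp (initSt_mem M hdet)
    rwa [this] at hmem
  · intro h
    exact ⟨initSt M hdet, initSt_mem M hdet, h⟩

lemma mem_L_shift {L : Set (ℕ → A)} (M : CoBuchi A Q) (hdet : M.Deterministic)
    (hL : M.Lang = L) (g : List A) (β : ℕ → A) :
    appW g β ∈ L ↔ β ∈ M.LangFrom (runSt M hdet (initSt M hdet) g) := by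
  rw [← hL]
  rw [mem_lang_iff M hdet, langFrom_shift M hdet]

lemma runSt_simL {L : Set (ℕ → A)} (M : CoBuchi A Q) (hdet : M.Deterministic)
    (hL : M.Lang = L) {a b : List A}
    (h : runSt M hdet (initSt M hdet) a = runSt M hdet (initSt M hdet) b) : SimL L a b := by
  intro w
  rw [mem_L_shift M hdet hL, mem_L_shift M hdet hL, h]

/-- LOOP: a reachable safe loop gives membership. -/
lemma loop_mem {L : Set (ℕ → A)} (M : CoBuchi A Q) (hdet : M.Deterministic)
    (hL : M.Lang = L) {g P : List A} {s : Q}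
    (hg : runSt M hdet (initSt M hdet) g = s) (hsl : M.SafeReach s P s) (hP : P ≠ []) :
    appW g (iterW P) ∈ L := by
  rw [mem_L_shift M hdet hL, hg, langFrom_iff M hdet]
  have hlen : 0 < P.length := List.length_pos_iff.mpr hP
  have Φ : ∀ k, M.SafeReach s (prefW (iterW P) k) (runSt M hdet s (prefW (iterW P) k)) ∧
      M.SafeReach (runSt M hdet s (prefW (iterW P) k)) (P.drop (k % P.length)) s := by
    intro k
    induction k with
    | zero =>
      constructor
      · rw [prefW_zero, runSt_nil]; exact rfl
      · rw [prefW_zero, runSt_nil, Nat.zero_mod, List.drop_zero]; exact hsl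
    | succ k ih =>
      obtain ⟨ih1, ih2⟩ := ih
      have hmod : k % P.length < P.length := Nat.mod_lt _ hlen
      rw [List.drop_eq_getElem_cons hmod] at ih2
      obtain ⟨p, htr, hrest⟩ := ih2
      have hlet : iterW P k = P[k % P.length] := by
        rw [iterW_apply hP]; rfl
      have hq' : runSt M hdet s (prefW (iterW P) (k+1)) = p := by
        rw [prefW_succ, runSt_snoc]
        rw [hlet]
        exact (congrArg Prod.snd (stp_uniq M hdet htr)).symm
      constructor
      · rw [hq', prefW_succ]
        refine (safeReach_append M).mpr ⟨_, ih1, ?_⟩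
        rw [hlet]
        exact ⟨p, htr, rfl⟩
      · rw [hq']
        have hmodsucc : (k+1) % P.length = (k % P.length + 1) % P.length :=
          (Nat.mod_add_mod k P.length 1).symm
        by_cases hend : k % P.length + 1 = P.length
        · have h0 : (k+1) % P.length = 0 := by rw [hmodsucc, hend, Nat.mod_self]
          have hnil : P.drop (k % P.length + 1) = [] := by rw [hend, List.drop_length]
          rw [hnil] at hrest
          have hps : p = s := hrest
          rw [h0, List.drop_zero, hps]
          exact hsl
        · have h1 : (k+1) % P.length = k % P.length + 1 := by
            rw [hmodsucc, Nat.mod_eq_of_lt (by omega)]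
          rw [h1]
          exact hrest
  refine ⟨0, fun n _ => ?_⟩
  obtain ⟨h1, h2⟩ := Φ n
  have hmod : n % P.length < P.length := Nat.mod_lt _ hlen
  rw [List.drop_eq_getElem_cons hmod] at h2
  obtain ⟨p, htr, -⟩ := h2
  rw [rkAt_def]
  have hlet : iterW P n = P[n % P.length] := by rw [iterW_apply hP]; rfl
  rw [hlet]
  exact (congrArg Prod.fst (stp_uniq M hdet htr)).symm

/-- LOOP2: membership of an ultimately periodic word gives an aligned reachable safe loop. -/
lemma loop2 {L : Set (ℕ → A)} (M : CoBuchi A Q) [Fintype Q] (hdet : M.Deterministic)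
    (hL : M.Lang = L) {g P : List A} (hP : P ≠ [])
    (hmem : appW g (iterW P) ∈ L) :
    ∃ k m s₀, 1 ≤ m ∧ runSt M hdet (initSt M hdet) (g ++ repCat P k) = s₀ ∧
      M.SafeReach s₀ (repCat P m) s₀ := by
  set s := runSt M hdet (initSt M hdet) g with hs
  rw [mem_L_shift M hdet hL, ← hs, langFrom_iff M hdet] at hmem
  obtain ⟨N, hN⟩ := hmem
  have hlen : 0 < P.length := List.length_pos_iff.mpr hP
  have seg : ∀ m n, N ≤ n →
      M.SafeReach (runSt M hdet s (prefW (iterW P) n))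
        ((List.range m).map (fun j => iterW P (n + j)))
        (runSt M hdet s (prefW (iterW P) (n + m))) := by
    intro m
    induction m with
    | zero => intro n _; simp; exact rfl
    | succ m ih =>
      intro n hn
      have hrg : (List.range (m+1)).map (fun j => iterW P (n + j))
          = iterW P n :: (List.range m).map (fun j => iterW P ((n+1) + j)) := by
        rw [List.range_succ_eq_map, List.map_cons, List.map_map]
        congr 1
        apply List.map_congr_left
        intro j _
        show iterW P (n + (j+1)) = iterW P ((n+1) + j)
        congr 1
        omega
      rw [hrg]
      have hstep2 := hN n hn
      rw [rkAt_def] at hstep2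
      have e2 : runSt M hdet s (prefW (iterW P) (n+1))
          = (stp M hdet (runSt M hdet s (prefW (iterW P) n)) (iterW P n)).2 := by
        rw [prefW_succ, runSt_snoc]
      refine ⟨runSt M hdet s (prefW (iterW P) (n+1)), ?_, ?_⟩
      · rw [e2]
        have hm := stp_mem M hdet (runSt M hdet s (prefW (iterW P) n)) (iterW P n)
        rwa [hstep2] at hm
      · have := ih (n+1) (by omega)
        rwa [show n + 1 + m = n + (m+1) by omega] at this
  have blk : ∀ k : ℕ, (List.range P.length).map (fun j => iterW P (k * P.length + j)) = P := by
    intro k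
    apply List.ext_getElem (by simp)
    intro i h1 h2
    simp only [List.getElem_map, List.getElem_range]
    rw [iterW_apply hP]
    simp only [List.get_eq_getElem]
    congr 1
    rw [Nat.add_mod, Nat.mul_mod_left]
    simp [Nat.mod_eq_of_lt h2]
  have pre : ∀ k : ℕ, prefW (iterW P) (k * P.length) = repCat P k := by
    intro k
    induction k with
    | zero => simp [prefW_zero, repCat]
    | succ k ih =>
      rw [Nat.succ_mul, prefW_add, ih, blk k]
      have e := repCat_add P k 1
      rw [repCat_one] at e
      rw [← e]
  set σ : ℕ → Q := fun k => runSt M hdet s (repCat P k) with hσ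
  have seg' : ∀ k, N ≤ k → M.SafeReach (σ k) P (σ (k+1)) := by
    intro k hk
    have hNk : N ≤ k * P.length := le_trans hk (Nat.le_mul_of_pos_right k hlen)
    have := seg P.length (k * P.length) hNk
    rw [blk k, pre k, show k * P.length + P.length = (k+1) * P.length by ring, pre (k+1)] at this
    exact this
  have segm : ∀ m k, N ≤ k → M.SafeReach (σ k) (repCat P m) (σ (k + m)) := by
    intro m
    induction m with
    | zero => intro k _; simp [repCat]; exact rfl
    | succ m ih =>
      intro k hk
      show M.SafeReach (σ k) (P ++ repCat P m) (σ (k + (m+1)))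
      refine (safeReach_append M).mpr ⟨σ (k+1), seg' k hk, ?_⟩
      have := ih (k+1) (by omega)
      rwa [show k + 1 + m = k + (m+1) by omega] at this
  -- pigeonhole
  obtain ⟨i, j, hij, hlt, heq⟩ : ∃ i j : Fin (Fintype.card Q + 1),
      i ≠ j ∧ (i : ℕ) < (j : ℕ) ∧ σ (N + i) = σ (N + j) := by
    obtain ⟨i, j, hij, heq⟩ := Fintype.exists_ne_map_eq_of_card_lt
      (fun i : Fin (Fintype.card Q + 1) => σ (N + i)) (by simp)
    rcases Nat.lt_or_ge (i : ℕ) (j : ℕ) with h | h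
    · exact ⟨i, j, hij, h, heq⟩
    · have : (j : ℕ) < (i : ℕ) := lt_of_le_of_ne h (fun hc => hij (Fin.ext hc.symm))
      exact ⟨j, i, hij.symm, this, heq.symm⟩
  refine ⟨N + i, (j : ℕ) - (i : ℕ), σ (N + i), by omega, ?_, ?_⟩
  · rw [runSt_append]
  · have := segm ((j : ℕ) - (i : ℕ)) (N + i) (by omega)
    rw [show N + (i : ℕ) + ((j : ℕ) - (i : ℕ)) = N + j by omega] at this
    rwa [← heq] at this

/-- languages of the form `SD D`. -/
def SD (M : CoBuchi A Q) (D : Set (Q × Q)) : Set (List A) :=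
  {x | ∃ s₁ s₂, (s₁, s₂) ∈ D ∧ ∃ s₃, M.SafeReach s₂ x s₃ ∧ ∃ h, M.SafeReach s₃ h s₁}

/-- the safe language of a pair is determined by a finite amount of data. -/
lemma sfl_eq_SD {L : Set (ℕ → A)} (M : CoBuchi A Q) [Fintype Q] (hdet : M.Deterministic)
    (hL : M.Lang = L) (w₁ w₂' : List A) :
    Sfl L w₁ w₂' = SD M {p : Q × Q |
      (∃ g, runSt M hdet (initSt M hdet) g = p.1 ∧ SimL L g w₁) ∧
      M.SafeReach p.1 w₂' p.2} := by
  ext x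
  simp only [Sfl, SD, Set.mem_setOf_eq]
  constructor
  · intro hx
    by_cases hnil : w₂' ++ x = []
    · obtain ⟨e1, e2⟩ := List.append_eq_nil_iff.mp hnil
      subst e1; subst e2
      refine ⟨runSt M hdet (initSt M hdet) w₁, runSt M hdet (initSt M hdet) w₁,
        ⟨⟨w₁, rfl, simL_refl L w₁⟩, rfl⟩, runSt M hdet (initSt M hdet) w₁, rfl, [], rfl⟩
    · rw [ApproxBot, not_and, not_forall] at hx
      obtain ⟨y, hy⟩ := hx hnil
      rw [Classical.not_imp, not_not] at hy
      obtain ⟨hsim, hmem⟩ := hy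
      set P := w₂' ++ x ++ y with hPdef
      have hPn : P ≠ [] := by
        intro hc
        rw [hPdef] at hc
        exact hnil (List.append_eq_nil_iff.mp hc).1
      have hsim' : SimL L (w₁ ++ P) w₁ := by
        have e : w₁ ++ P = w₁ ++ (w₂' ++ x) ++ y := by simp [hPdef, List.append_assoc]
        rw [e]; exact hsim
      have hmem' : appW w₁ (iterW P) ∈ L := hmem
      obtain ⟨k, m, s₀, hm, hrun, hsafe⟩ := loop2 M hdet hL hPn hmem'
      obtain ⟨m', rfl⟩ : ∃ m', m = m' + 1 := ⟨m - 1, by omega⟩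
      have hdec : repCat P (m' + 1) = w₂' ++ (x ++ (y ++ repCat P m')) := by
        show P ++ repCat P m' = _
        rw [hPdef]; simp [List.append_assoc]
      rw [hdec] at hsafe
      obtain ⟨s₂, h12, hrest⟩ := (safeReach_append M).mp hsafe
      obtain ⟨s₃, h23, h31⟩ := (safeReach_append M).mp hrest
      exact ⟨s₀, s₂, ⟨⟨w₁ ++ repCat P k, hrun, simL_repCat hsim' k⟩, h12⟩,
        s₃, h23, y ++ repCat P m', h31⟩
  · rintro ⟨s₁, s₂, ⟨⟨g, hg, hgsim⟩, h12⟩, s₃, h23, h, h31⟩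
    rintro ⟨hne, HAB⟩
    set Loop := w₂' ++ x ++ h with hLoopdef
    have hLn : Loop ≠ [] := by
      intro hc
      rw [hLoopdef] at hc
      exact hne (List.append_eq_nil_iff.mp hc).1
    have hsl : M.SafeReach s₁ Loop s₁ := by
      rw [hLoopdef]
      exact (safeReach_append M).mpr ⟨s₃, (safeReach_append M).mpr ⟨s₂, h12, h23⟩, h31⟩
    have hmemg : appW g (iterW Loop) ∈ L := loop_mem M hdet hL hg hsl hLn
    have hmemw : appW w₁ (iterW Loop) ∈ L := (hgsim (iterW Loop)).mp hmemg
    have hsimgoal : SimL L (w₁ ++ (w₂' ++ x) ++ h) w₁ := by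
      have e : w₁ ++ (w₂' ++ x) ++ h = w₁ ++ Loop := by simp [hLoopdef, List.append_assoc]
      rw [e]
      have t1 : SimL L (w₁ ++ Loop) (g ++ Loop) := simL_append (simL_symm hgsim) Loop
      have t2 : SimL L (g ++ Loop) g := by
        apply runSt_simL M hdet hL
        rw [runSt_append, hg, safeReach_runSt M hdet hsl]
      exact simL_trans t1 (simL_trans t2 hgsim)
    exact HAB h hsimgoal hmemw

/-- a set of pairs with minimal safe language exists. -/
lemma exists_min_sfl {L : Set (ℕ → A)} (hrec : DCWRecognizable L)
    (F' : Set (List A × List A)) (hne : F'.Nonempty) :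
    ∃ p ∈ F', ∀ p' ∈ F', Sfl L p'.1 p'.2 ⊆ Sfl L p.1 p.2 →
      Sfl L p'.1 p'.2 = Sfl L p.1 p.2 := by
  obtain ⟨Q, instF, M, hdet, hL⟩ := hrec
  letI := instF
  have himg : ∀ p : List A × List A, Sfl L p.1 p.2 ∈ Set.range (SD M) := by
    intro p
    exact ⟨_, (sfl_eq_SD M hdet hL p.1 p.2).symm⟩
  have hfin : ((fun p : List A × List A => Sfl L p.1 p.2) '' F').Finite := by
    apply Set.Finite.subset (Set.finite_range (SD M))
    rintro T ⟨p, _, rfl⟩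
    exact himg p
  obtain ⟨T, hT, hmin⟩ : ∃ T ∈ (fun p : List A × List A => Sfl L p.1 p.2) '' F',
      ∀ T' ∈ (fun p : List A × List A => Sfl L p.1 p.2) '' F', id T' ≤ id T → id T = id T' := by
    obtain ⟨T, hT, hmin⟩ := Set.Finite.exists_minimalFor id _ hfin (hne.image _)
    exact ⟨T, hT, fun T' hT' hle => le_antisymm (hmin hT' hle) hle⟩
  obtain ⟨p, hp, hTp⟩ := hT
  simp only at hTp
  refine ⟨p, hp, fun p' hp' hsub => ?_⟩
  have hle : id (Sfl L p'.1 p'.2) ≤ id T := by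
    simp only [id_eq, ← hTp]
    exact hsub
  have h2 := hmin _ ⟨p', hp', rfl⟩ hle
  simp only [id_eq] at h2
  rw [hTp]
  exact h2.symm

end Det
section Exist
open CoBuchi
variable {A : Type} [Nonempty A]
set_option linter.unusedSectionVars false

lemma not_approxBot_nil (L : Set (ℕ → A)) (a : List A) : ¬ ApproxBot L a [] :=
  fun h => h.1 rfl

lemma not_approxBot_iff {L : Set (ℕ → A)} {a w : List A} (hw : w ≠ []) :
    ¬ ApproxBot L a w ↔ ∃ y, SimL L (a ++ w ++ y) a ∧ upW a (w ++ y) ∈ L := by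
  rw [ApproxBot, not_and, not_forall]
  constructor
  · intro h
    obtain ⟨y, hy⟩ := h hw
    rw [Classical.not_imp, not_not] at hy
    exact ⟨y, hy⟩
  · intro ⟨y, h1, h2⟩ _
    exact ⟨y, by rw [Classical.not_imp, not_not]; exact ⟨h1, h2⟩⟩

/-- MAIN existence lemma: given `(u,v)` not `⊥`, there is a pointed pair over the
class of `u` whose safe language contains `v`. -/
lemma exists_pointed {L : Set (ℕ → A)} (hrec : DCWRecognizable L) {u v : List A}
    (hnb : ¬ ApproxBot L u v) :
    ∃ (u₁ u₂ : List A) (_h : IsPointed L u₁ u₂), SimL L (u₁ ++ u₂) u ∧ ¬ ApproxBot L u₁ (u₂ ++ v) := by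
  classical
  by_cases hv : v = []
  · -- family of all non-bottom pairs over the class of u
    subst hv
    set G : Set (List A × List A) :=
      {p | SimL L (p.1 ++ p.2) u ∧ ¬ ApproxBot L p.1 p.2} with hG
    have hGne : G.Nonempty := by
      refine ⟨(u, []), ?_, not_approxBot_nil L u⟩
      show SimL L (u ++ []) u
      rw [List.append_nil]
      exact simL_refl L u
    obtain ⟨p, hpG, hmin⟩ := exists_min_sfl hrec G hGne
    obtain ⟨hps, hpn⟩ := hpG
    refine ⟨p.1, p.2, ⟨hpn, ?_⟩, hps, by rw [List.append_nil]; exact hpn⟩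
    intro w₁ w₂ hsim hnab
    have hcomp : (w₁, w₂ ++ p.2) ∈ G := by
      constructor
      · show SimL L (w₁ ++ (w₂ ++ p.2)) u
        have h1 : SimL L ((w₁ ++ w₂) ++ p.2) (p.1 ++ p.2) := simL_append hsim p.2
        rw [List.append_assoc] at h1
        exact simL_trans h1 hps
      · exact hnab
    exact (hmin (w₁, w₂ ++ p.2) hcomp (sfl_incl hsim p.2)).symm
  · -- v ≠ [] : use the witness loop
    obtain ⟨x, hx1, hx2⟩ := (not_approxBot_iff hv).mp hnb
    rw [List.append_assoc] at hx1
    -- hx1 : SimL L (u ++ (v ++ x)) u, hx2 : upW u (v ++ x) ∈ L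
    have hrec2 := hrec
    obtain ⟨Q, instF, M, hdet, hL⟩ := hrec2
    letI := instF
    haveI : Nonempty Q := ⟨initSt M hdet⟩
    set K := Fintype.card Q with hK
    have hK1 : 1 ≤ K := Fintype.card_pos
    set w := v ++ x with hw
    have hwne : w ≠ [] := by
      intro hc
      exact hv (List.append_eq_nil_iff.mp hc).1
    set R := repCat w K with hR
    have hRne : R ≠ [] := repCat_ne_nil hwne hK1
    set F : Set (List A × List A) :=
      {p | SimL L (p.1 ++ p.2) u ∧ ¬ ApproxBot L p.1 p.2 ∧ ∃ w₂, p.2 = w₂ ++ R} with hF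
    -- the base element (u, R)
    have hbase : (u, R) ∈ F := by
      refine ⟨simL_repCat hx1 K, ?_, [], by simp⟩
      rw [not_approxBot_iff hRne]
      refine ⟨w, ?_, ?_⟩
      · have e : u ++ R ++ w = u ++ repCat w (K + 1) := by
          rw [repCat_add, repCat_one, List.append_assoc]
        rw [e]
        exact simL_repCat hx1 (K+1)
      · have e : R ++ w = repCat w (K + 1) := by rw [repCat_add, repCat_one]
        rw [upW_def, e, iterW_repCat hwne (by omega)]
        exact hx2
    -- every member of F has v in its safe language
    have hkey : ∀ p ∈ F, ¬ ApproxBot L p.1 (p.2 ++ v) := by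
      rintro ⟨w₁, w₂''⟩ ⟨hsimu, hnab, w₂, hw2⟩
      simp only at hsimu hnab hw2 ⊢
      subst hw2
      have hw2ne : w₂ ++ R ≠ [] := by
        intro hc
        exact hRne (List.append_eq_nil_iff.mp hc).2
      obtain ⟨t, hsimt, hmemt⟩ := (not_approxBot_iff hw2ne).mp hnab
      set P := (w₂ ++ R) ++ t with hP
      have hPne : P ≠ [] := by
        intro hc
        exact hw2ne (List.append_eq_nil_iff.mp hc).1
      have hsimP : SimL L (w₁ ++ P) w₁ := by
        rw [hP, ← List.append_assoc]
        exact hsimt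
      obtain ⟨k, m, s₀, hm, hrun, hsafe⟩ := loop2 M hdet hL hPne hmemt
      obtain ⟨m', rfl⟩ : ∃ m', m = m' + 1 := ⟨m - 1, by omega⟩
      -- decompose the safe loop
      have hdec : repCat P (m' + 1) = w₂ ++ (R ++ (t ++ repCat P m')) := by
        show P ++ repCat P m' = _
        rw [hP]
        simp [List.append_assoc]
      rw [hdec] at hsafe
      obtain ⟨c₀, hc0, hrest⟩ := (safeReach_append M).mp hsafe
      obtain ⟨cK, hcK, htail⟩ := (safeReach_append M).mp hrest
      -- boundary states
      set b : ℕ → Q := fun l => runSt M hdet c₀ (repCat w l) with hb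
      have hbseg : ∀ i j : ℕ, i ≤ j → j ≤ K → M.SafeReach (b i) (repCat w (j - i)) (b j) := by
        intro i j hij hjK
        have hsplit : R = repCat w i ++ (repCat w (j - i) ++ repCat w (K - j)) := by
          rw [hR, ← repCat_add, ← repCat_add]
          congr 1
          omega
        rw [hsplit] at hcK
        obtain ⟨mi, hmi, hrest2⟩ := (safeReach_append M).mp hcK
        obtain ⟨mj, hmj, _⟩ := (safeReach_append M).mp hrest2
        have hmi' : mi = b i := by
          rw [hb]
          exact (safeReach_runSt M hdet hmi).symm
        have hmj' : mj = b j := by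
          have e1 : runSt M hdet c₀ (repCat w j) = b j := rfl
          rw [← e1, show j = i + (j - i) by omega, repCat_add, runSt_append,
            safeReach_runSt M hdet hmi, safeReach_runSt M hdet hmj]
        rw [hmi', hmj'] at hmj
        exact hmj
      have hbK : ∀ j : ℕ, j ≤ K → M.SafeReach (b j) (repCat w (K - j)) cK := by
        intro j hjK
        have hsplit : R = repCat w j ++ repCat w (K - j) := by
          rw [hR, ← repCat_add]
          congr 1
          omega
        rw [hsplit] at hcK
        obtain ⟨mj, hmj, hrest2⟩ := (safeReach_append M).mp hcK
        have hmj' : mj = b j := by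
          rw [hb]
          exact (safeReach_runSt M hdet hmj).symm
        rwa [hmj'] at hrest2
      -- pigeonhole on the K+1 boundary states
      obtain ⟨i, j, hlt, heq⟩ : ∃ i j : ℕ, i < j ∧ j ≤ K ∧ b i = b j := by
        obtain ⟨i, j, hij, heq⟩ := Fintype.exists_ne_map_eq_of_card_lt
          (fun l : Fin (K + 1) => b l) (by simp [hK])
        rcases Nat.lt_or_ge (i : ℕ) (j : ℕ) with h | h
        · exact ⟨i, j, h, by omega, heq⟩
        · have : (j : ℕ) < (i : ℕ) := lt_of_le_of_ne h (fun hc => hij (Fin.ext hc.symm))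
          exact ⟨j, i, this, by omega, heq.symm⟩
      obtain ⟨hjK, heq⟩ := heq
      set d := j - i with hd
      have hd1 : 1 ≤ d := by omega
      -- the pumped safe loop
      set Loop := w₂ ++ (repCat w j ++ (repCat w d ++ (repCat w (K - j) ++ (t ++ repCat P m')))) with hLoop
      have hsl : M.SafeReach s₀ Loop s₀ := by
        rw [hLoop]
        refine (safeReach_append M).mpr ⟨c₀, hc0, ?_⟩
        refine (safeReach_append M).mpr ⟨b j, ?_, ?_⟩
        · have := hbseg 0 j (by omega) hjK
          simp only [Nat.sub_zero] at this
          have hb0 : b 0 = c₀ := by rw [hb]; rfl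
          rwa [hb0] at this
        refine (safeReach_append M).mpr ⟨b j, ?_, ?_⟩
        · have := hbseg i j (by omega) hjK
          rwa [heq] at this
        refine (safeReach_append M).mpr ⟨cK, hbK j hjK, htail⟩
      have hLne : Loop ≠ [] := by
        rw [hLoop]
        intro hc
        obtain ⟨-, hc2⟩ := List.append_eq_nil_iff.mp hc
        obtain ⟨-, hc3⟩ := List.append_eq_nil_iff.mp hc2
        obtain ⟨hc4, -⟩ := List.append_eq_nil_iff.mp hc3
        exact repCat_ne_nil hwne hd1 hc4
      -- membership of the pumped word
      have hmemLoop : appW w₁ (iterW Loop) ∈ L := by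
        have hg : appW (w₁ ++ repCat P k) (iterW Loop) ∈ L :=
          loop_mem M hdet hL hrun hsl hLne
        exact (simL_repCat hsimP k (iterW Loop)).mp hg
      -- merging the pumped blocks
      have emerge : ∀ X : List A, repCat w j ++ (repCat w d ++ (repCat w (K - j) ++ X))
          = repCat w (K + d) ++ X := by
        intro X
        rw [show K + d = j + (d + (K - j)) by omega, repCat_add, repCat_add]
        simp only [List.append_assoc]
      have e1 : w₁ ++ Loop = (w₁ ++ (w₂ ++ repCat w (K + d))) ++ (t ++ repCat P m') := by
        rw [hLoop, emerge]
        simp only [List.append_assoc]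
      have hsimKd : SimL L (w₁ ++ (w₂ ++ repCat w (K + d))) u := by
        have e2 : w₁ ++ (w₂ ++ repCat w (K + d)) = (w₁ ++ (w₂ ++ R)) ++ repCat w d := by
          rw [repCat_add, ← hR]
          simp only [List.append_assoc]
        rw [e2]
        have h5 := simL_append hsimu (repCat w d)
        exact simL_trans h5 (simL_repCat hx1 d)
      have hres : SimL L (w₁ ++ Loop) w₁ := by
        rw [e1]
        have s2 : SimL L ((w₁ ++ (w₂ ++ repCat w (K + d))) ++ (t ++ repCat P m'))
            (u ++ (t ++ repCat P m')) := simL_append hsimKd _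
        have s4 : SimL L (u ++ (t ++ repCat P m'))
            ((w₁ ++ (w₂ ++ R)) ++ (t ++ repCat P m')) := simL_append (simL_symm hsimu) _
        have s5 : (w₁ ++ (w₂ ++ R)) ++ (t ++ repCat P m') = (w₁ ++ P) ++ repCat P m' := by
          rw [hP]
          simp only [List.append_assoc]
        have s6 : SimL L ((w₁ ++ P) ++ repCat P m') (w₁ ++ repCat P m') :=
          simL_append hsimP _
        have s7 := simL_repCat hsimP m'
        rw [s5] at s4
        exact simL_trans s2 (simL_trans s4 (simL_trans s6 s7))
      -- conclude
      have hvRne : (w₂ ++ R) ++ v ≠ [] := by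
        intro hc
        exact hv (List.append_eq_nil_iff.mp hc).2
      have hLeq : ((w₂ ++ R) ++ v) ++ (x ++ (repCat w (d - 1) ++ (t ++ repCat P m'))) = Loop := by
        have e3 : Loop = w₂ ++ (repCat w (K + d) ++ (t ++ repCat P m')) := by
          rw [hLoop, emerge]
        rw [e3]
        have e4 : repCat w (K + d) = R ++ (w ++ repCat w (d - 1)) := by
          rw [show K + d = K + (1 + (d-1)) by omega, repCat_add, repCat_add, repCat_one, ← hR]
        rw [e4, hw]
        simp only [List.append_assoc]
      rw [not_approxBot_iff hvRne]
      refine ⟨x ++ (repCat w (d - 1) ++ (t ++ repCat P m')), ?_, ?_⟩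
      · have e5 : w₁ ++ ((w₂ ++ R) ++ v) ++ (x ++ (repCat w (d - 1) ++ (t ++ repCat P m')))
            = w₁ ++ Loop := by
          rw [← hLeq]
          simp only [List.append_assoc]
        rw [e5]
        exact hres
      · rw [upW_def, hLeq]
        exact hmemLoop
    -- take a minimal element of F
    obtain ⟨p, hpF, hmin⟩ := exists_min_sfl hrec F ⟨(u, R), hbase⟩
    obtain ⟨hps, hpn, w₂p, hw2p⟩ := hpF
    refine ⟨p.1, p.2, ⟨hpn, ?_⟩, hps, hkey p ⟨hps, hpn, w₂p, hw2p⟩⟩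
    intro w₁ w₂ hsim hnab
    have hcomp : (w₁, w₂ ++ p.2) ∈ F := by
      refine ⟨?_, hnab, w₂ ++ w₂p, by rw [hw2p, List.append_assoc]⟩
      show SimL L (w₁ ++ (w₂ ++ p.2)) u
      have h1 : SimL L ((w₁ ++ w₂) ++ p.2) (p.1 ++ p.2) := simL_append hsim p.2
      rw [List.append_assoc] at h1
      exact simL_trans h1 hps
    exact (hmin (w₁, w₂ ++ p.2) hcomp (sfl_incl hsim p.2)).symm

end Exist
section Canon
open CoBuchi
variable {A : Type} [Nonempty A]
set_option linter.unusedSectionVars false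

lemma cls_eq_of_equiv {L : Set (ℕ → A)} {u v u' v' : List A}
    {h : IsPointed L u v} {h' : IsPointed L u' v'} (he : EquivL L u v u' v') :
    cls L u v h = cls L u' v' h' :=
  Quot.sound he

lemma equiv_of_cls_eq {L : Set (ℕ → A)} {u v u' v' : List A}
    {h : IsPointed L u v} {h' : IsPointed L u' v'} (he : cls L u v h = cls L u' v' h') :
    EquivL L u v u' v' :=
  Quotient.exact he

lemma equivL_refl_of_eq {L : Set (ℕ → A)} {u v v' : List A} (e : v = v') :
    EquivL L u v u v' := by
  subst e
  exact ⟨simL_refl L _, rfl⟩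

/-- safe runs in the canonical automaton along pointed extensions. -/
lemma safeReach_canon {L : Set (ℕ → A)} (u₁ : List A) :
    ∀ (wv u₂ : List A) (h : IsPointed L u₁ u₂), ¬ ApproxBot L u₁ (u₂ ++ wv) →
      ∃ h2 : IsPointed L u₁ (u₂ ++ wv),
        (canonAut L).SafeReach (cls L u₁ u₂ h) wv (cls L u₁ (u₂ ++ wv) h2) := by
  intro wv
  induction wv with
  | nil =>
    intro u₂ h hna
    refine ⟨by rwa [List.append_nil], ?_⟩
    show cls L u₁ u₂ h = cls L u₁ (u₂ ++ []) _
    exact cls_eq_of_equiv (equivL_refl_of_eq (List.append_nil u₂).symm)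
  | cons c wv' ih =>
    intro u₂ h hna
    have hna1 : ¬ ApproxBot L u₁ (u₂ ++ [c]) := by
      intro hab
      apply hna
      have := approxBot_mono hab wv'
      rwa [List.append_assoc, List.singleton_append] at this
    have h2 := isPointed_ext h c hna1
    have hna' : ¬ ApproxBot L u₁ ((u₂ ++ [c]) ++ wv') := by
      rwa [List.append_assoc, List.singleton_append]
    obtain ⟨h3, hs⟩ := ih (u₂ ++ [c]) h2 hna'
    have htr : (cls L u₁ u₂ h, c, Rk.two, cls L u₁ (u₂ ++ [c]) h2) ∈ (canonAut L).delta :=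
      Or.inl ⟨u₁, u₂, h, h2, hna1, rfl, rfl, rfl⟩
    have e : (u₂ ++ [c]) ++ wv' = u₂ ++ (c :: wv') := by
      rw [List.append_assoc, List.singleton_append]
    have h4 : IsPointed L u₁ (u₂ ++ c :: wv') := by rwa [e] at h3
    refine ⟨h4, cls L u₁ (u₂ ++ [c]) h2, htr, ?_⟩
    have he : cls L u₁ (u₂ ++ c :: wv') h4 = cls L u₁ ((u₂ ++ [c]) ++ wv') h3 :=
      cls_eq_of_equiv (equivL_refl_of_eq e.symm)
    rw [he]
    exact hs

/-- reaching any pointed class over the right residual. -/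
lemma reach_canon {L : Set (ℕ → A)} (hrec : DCWRecognizable L) :
    ∀ (wu a b : List A) (h : IsPointed L a b), SimL L (a ++ b) wu →
      ∃ p₀ ∈ (canonAut L).init, (canonAut L).Reach p₀ wu (cls L a b h) := by
  intro wu
  induction wu using List.reverseRecOn with
  | nil =>
    intro a b h hsim
    exact ⟨cls L a b h, ⟨a, b, h, rfl, hsim⟩, rfl⟩
  | append_singleton y c ih =>
    intro a b h hsim
    obtain ⟨a', b', h', hsim', -⟩ := exists_pointed hrec (not_approxBot_nil L y)
    obtain ⟨p₀, hinit, hreach⟩ := ih a' b' h' hsim'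
    have hcond : SimL L (a' ++ b' ++ [c]) (a ++ b) := by
      have h1 : SimL L ((a' ++ b') ++ [c]) (y ++ [c]) := simL_append hsim' [c]
      exact simL_trans h1 (simL_symm hsim)
    have htr : (cls L a' b' h', c, Rk.one, cls L a b h) ∈ (canonAut L).delta :=
      Or.inr ⟨a', b', a, b, h', h, hcond, rfl, rfl, rfl⟩
    exact ⟨p₀, hinit, reach_snoc (canonAut L) hreach htr⟩

/-- invariant of any-rank runs in the canonical automaton. -/
lemma reach_inv {L : Set (ℕ → A)} :
    ∀ (wu : List A) (q p : CanonState L), (canonAut L).Reach q wu p →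
      ∀ z : List A, (∃ (a b : List A) (h : IsPointed L a b), q = cls L a b h ∧ SimL L (a ++ b) z) →
      ∃ (a' b' : List A) (h' : IsPointed L a' b'), p = cls L a' b' h' ∧ SimL L (a' ++ b') (z ++ wu) := by
  intro wu
  induction wu with
  | nil =>
    rintro q p hqp z ⟨a, b, h, hqe, hsim⟩
    have hqp' : q = p := hqp
    exact ⟨a, b, h, by rw [← hqp', hqe], by rwa [List.append_nil]⟩
  | cons c wu' ih =>
    rintro q p ⟨rk, q₁, htr, hrest⟩ z ⟨a, b, h, rfl, hsim⟩
    have hq1 : ∃ (a₂ b₂ : List A) (h₂ : IsPointed L a₂ b₂),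
        q₁ = cls L a₂ b₂ h₂ ∧ SimL L (a₂ ++ b₂) (z ++ [c]) := by
      rcases htr with ⟨u, v, hh, hh', hna, hqe, -, hq1e⟩ | ⟨u, v, u', v', hh, hh', hsim1, hqe, -, hq1e⟩
      · have hE := equiv_of_cls_eq hqe.symm
        refine ⟨u, v ++ [c], hh', hq1e, ?_⟩
        have h1 : SimL L ((u ++ v) ++ [c]) ((a ++ b) ++ [c]) := simL_append hE.1 [c]
        have h2 : SimL L ((a ++ b) ++ [c]) (z ++ [c]) := simL_append hsim [c]
        rw [← List.append_assoc]
        exact simL_trans h1 h2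
      · have hE := equiv_of_cls_eq hqe.symm
        refine ⟨u', v', hh', hq1e, ?_⟩
        have h1 : SimL L ((u ++ v) ++ [c]) ((a ++ b) ++ [c]) := simL_append hE.1 [c]
        have h2 : SimL L ((a ++ b) ++ [c]) (z ++ [c]) := simL_append hsim [c]
        have h3 : SimL L (u' ++ v') (u ++ v ++ [c]) := simL_symm hsim1
        exact simL_trans h3 (simL_trans h1 h2)
    have := ih q₁ p hrest (z ++ [c]) hq1
    rwa [List.append_assoc, List.singleton_append] at this
  
/-- invariant of safe runs in the canonical automaton. -/
lemma safe_inv {L : Set (ℕ → A)} :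
    ∀ (wv : List A) (q p : CanonState L), (canonAut L).SafeReach q wv p →
      ∀ (a b : List A) (h : IsPointed L a b), q = cls L a b h →
      ∃ h2 : IsPointed L a (b ++ wv), ¬ ApproxBot L a (b ++ wv) ∧ p = cls L a (b ++ wv) h2 := by
  intro wv
  induction wv with
  | nil =>
    intro q p hqp a b h hq
    have hp : q = p := hqp
    refine ⟨by rwa [List.append_nil], by rw [List.append_nil]; exact h.1, ?_⟩
    rw [← hp, hq]
    exact cls_eq_of_equiv (equivL_refl_of_eq (List.append_nil b).symm)
  | cons c wv' ih =>
    rintro q p ⟨q₁, htr, hrest⟩ a b h hq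
    rcases htr with ⟨u, v, hh, hh', hna, hqe, -, hq1e⟩ | ⟨u, v, u', v', hh, hh', hsim1, hqe, hrk, hq1e⟩
    · -- rank-2 transition
      have hqe2 : q = cls L u v hh := hqe
      have hq1e2 : q₁ = cls L u (v ++ [c]) hh' := hq1e
      have hna2 : ¬ ApproxBot L u (v ++ [c]) := hna
      have hE : EquivL L u v a b := equiv_of_cls_eq (hq ▸ hqe2.symm : cls L u v hh = cls L a b h)
      have hnac : ¬ ApproxBot L a (b ++ [c]) := by
        have hmem : [c] ∈ Sfl L u v := hna2
        rw [hE.2] at hmem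
        exact hmem
      have h2c := isPointed_ext h c hnac
      have hq1e' : q₁ = cls L a (b ++ [c]) h2c := by
        rw [hq1e2]
        apply cls_eq_of_equiv
        constructor
        · have h1 : SimL L ((u ++ v) ++ [c]) ((a ++ b) ++ [c]) := simL_append hE.1 [c]
          rw [List.append_assoc, List.append_assoc] at h1
          exact h1
        · rw [sfl_shift, sfl_shift, hE.2]
      obtain ⟨h3, hna3, hpe⟩ := ih q₁ p hrest a (b ++ [c]) h2c hq1e'
      have e : (b ++ [c]) ++ wv' = b ++ (c :: wv') := by
        rw [List.append_assoc, List.singleton_append]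
      have h3' : IsPointed L a (b ++ c :: wv') := by rwa [e] at h3
      refine ⟨h3', by rwa [e] at hna3, ?_⟩
      rw [hpe]
      exact cls_eq_of_equiv (equivL_refl_of_eq e)
    · -- rank-1 transition: impossible
      exact absurd hrk.symm (by simp)

end Canon
/-- `θ(u,v) = ∅` iff `(u,v) ≈_L ⊥`. -/
theorem stmt15 {A : Type} [Nonempty A] [Fintype A] (L : Set (ℕ → A))
    (hrec : DCWRecognizable L) (u v : List A) :
    theta L u v = ∅ ↔ ApproxBot L u v := by
  constructor
  · intro hempty
    by_contra hnb
    obtain ⟨u₁, u₂, h, hsim, hnab⟩ := exists_pointed hrec hnb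
    obtain ⟨p₀, hinit, hreach⟩ := reach_canon hrec u u₁ u₂ h hsim
    obtain ⟨h2, hsafe⟩ := safeReach_canon u₁ v u₂ h hnab
    have hmem : cls L u₁ (u₂ ++ v) h2 ∈ theta L u v :=
      ⟨p₀, hinit, cls L u₁ u₂ h, hreach, hsafe⟩
    rw [hempty] at hmem
    exact hmem
  · intro hab
    rw [Set.eq_empty_iff_forall_notMem]
    rintro s ⟨p₀, hinit, pmid, hreach, hsafe⟩
    obtain ⟨a0, b0, h0, hp0, hsim0⟩ := hinit
    obtain ⟨a', b', h', hpm, hsim'⟩ :=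
      reach_inv u p₀ pmid hreach [] ⟨a0, b0, h0, hp0, hsim0⟩
    rw [List.nil_append] at hsim'
    obtain ⟨h2, hna2, -⟩ := safe_inv v pmid s hsafe a' b' h' hpm
    have hsub := sfl_incl hsim' ([] : List A)
    rw [List.append_nil] at hsub
    have hv : v ∈ Sfl L a' b' := hna2
    have hv2 : v ∈ Sfl L u [] := hsub hv
    have hfin : ¬ ApproxBot L u ([] ++ v) := hv2
    rw [List.nil_append] at hfin
    exact hfin hab
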